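/- Suppose n = 2m, m̄ = m + 1, and z_m = i t, z_{m̄} = −i t. Then det(2x·1_n − H/t) = U_m(x)² for all x ∈ ℂ, and the set of eigenvalues of H is exactly { 2t cos(jπ/(m+1)) : j = 1, …, m }, each eigenvalue having algebraic multiplicity two. -/

import Mathlib

open Matrix Complex Polynomial

/-- The uniform `n`-site open chain with hopping `t` and defect potentials
`zm` at site `m` and `zmb` at the mirror site `m̄ = n+1−m` (1-based sites). -/
noncomputable def Hu (n m : ℕ) (t : ℝ) (zm zmb : ℂ) : Matrix (Fin n) (Fin n) ℂ :=
  fun i j =>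
    if (i : ℕ) = (j : ℕ) then
      (if (i : ℕ) + 1 = m then zm else if (i : ℕ) + 1 = n + 1 - m then zmb else 0)
    else if (i : ℕ) + 1 = (j : ℕ) ∨ (j : ℕ) + 1 = (i : ℕ) then (t : ℂ)
    else 0


noncomputable def triM (d : ℕ → ℂ) (k : ℕ) : Matrix (Fin k) (Fin k) ℂ :=
  Matrix.of fun i j =>
    if (i:ℕ) = (j:ℕ) then d i
    else if (i:ℕ)+1 = (j:ℕ) ∨ (j:ℕ)+1 = (i:ℕ) then -1 else 0

lemma triM_rec (d : ℕ → ℂ) (k : ℕ) :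
    (triM d (k+2)).det
      = d 0 * (triM (fun i => d (i+1)) (k+1)).det - (triM (fun i => d (i+2)) k).det := by
  have h00 : triM d (k+2) 0 0 = d 0 := by simp [triM]
  have h01 : triM d (k+2) 0 1 = -1 := by simp [triM]
  rw [show ((k:ℕ)+2) = (k+1).succ from rfl, Matrix.det_succ_row_zero]
  rw [Fin.sum_univ_succ, Fin.sum_univ_succ]
  have hzero : ∀ j : Fin k,
      (-1:ℂ) ^ ((j.succ.succ : Fin (k+2)) : ℕ) * triM d (k+2) 0 j.succ.succ *
        ((triM d (k+2)).submatrix Fin.succ (j.succ.succ).succAbove).det = 0 := by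
    intro j
    have : triM d (k+2) 0 j.succ.succ = 0 := by
      simp [triM, Fin.val_succ]
    simp [this]
  rw [Finset.sum_congr rfl (fun j _ => hzero j), Finset.sum_const_zero, add_zero]
  have hsub0 : (triM d (k+2)).submatrix Fin.succ ((0 : Fin (k+2)).succAbove)
      = triM (fun i => d (i+1)) (k+1) := by
    ext i j
    simp only [Matrix.submatrix_apply, Fin.succAbove_zero, triM, Matrix.of_apply, Fin.val_succ]
    rcases eq_or_ne (i:ℕ) (j:ℕ) with h | h <;> simp [h] <;> omega
  have hsub1 : ((triM d (k+2)).submatrix Fin.succ (((0:Fin (k+1)).succ).succAbove)).det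
      = -(triM (fun i => d (i+2)) k).det := by
    rw [Matrix.det_succ_column_zero]
    rw [Fin.sum_univ_succ]
    have hz : ∀ i : Fin k,
        (-1:ℂ) ^ ((i.succ : Fin (k+1)) : ℕ) *
          (triM d (k+2)).submatrix Fin.succ (((0:Fin (k+1)).succ).succAbove) i.succ 0 *
          (((triM d (k+2)).submatrix Fin.succ
            (((0:Fin (k+1)).succ).succAbove)).submatrix i.succ.succAbove Fin.succ).det = 0 := by
      intro i
      have h0 : ((0:Fin (k+1)).succ).succAbove (0 : Fin (k+1)) = 0 := Fin.succ_succAbove_zero 0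
      have : (triM d (k+2)).submatrix Fin.succ (((0:Fin (k+1)).succ).succAbove) i.succ 0 = 0 := by
        rw [Matrix.submatrix_apply, h0]
        simp [triM, Fin.val_succ]
      simp [this]
      left
      simp [triM, Fin.val_succ]
    rw [Finset.sum_congr rfl (fun i _ => hz i), Finset.sum_const_zero, add_zero]
    have h0 : ((0:Fin (k+1)).succ).succAbove (0 : Fin (k+1)) = 0 := Fin.succ_succAbove_zero 0
    have hB00 : (triM d (k+2)).submatrix Fin.succ (((0:Fin (k+1)).succ).succAbove) 0 0 = -1 := by
      rw [Matrix.submatrix_apply, h0]; simp [triM]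
    have hmin : ((triM d (k+2)).submatrix Fin.succ
        (((0:Fin (k+1)).succ).succAbove)).submatrix ((0:Fin (k+1)).succAbove) Fin.succ
        = triM (fun i => d (i+2)) k := by
      ext i j
      have hcol : ((0:Fin (k+1)).succ).succAbove (Fin.succ j) = j.succ.succ := by
        rw [Fin.succ_succAbove_succ, Fin.succAbove_zero]
      simp only [Matrix.submatrix_apply, Fin.succAbove_zero, hcol, triM, Matrix.of_apply,
        Fin.val_succ]
      rcases eq_or_ne (i:ℕ) (j:ℕ) with h | h
      · simp [h]
      · have h1 : ¬((i:ℕ)+1+1 = (j:ℕ)+1+1) := by omega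
        simp only [h1, if_false, h, if_false]
        by_cases h2 : (i:ℕ)+1 = (j:ℕ) <;> by_cases h3 : (j:ℕ)+1 = (i:ℕ) <;>
          simp [h2, h3] <;> omega
    rw [hmin, hB00]
    simp
  rw [hsub0, hsub1, h00]
  have h01' : triM d (k+1).succ 0 (Fin.succ 0) = (-1:ℂ) := by simp [triM]
  rw [h01']
  simp [Fin.val_succ]
  ring


lemma key (x : ℂ) (m : ℕ) (hm : 1 ≤ m) (G : ℕ → ℂ)
    (h0 : G 0 = 1)
    (h1 : G 1 = (if 1 = m then 2*x + Complex.I else 2*x))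
    (hrec : ∀ j, j + 2 ≤ 2*m →
      G (j+2) = (if j+2 = m then 2*x + Complex.I else if j+2 = m+1 then 2*x - Complex.I else 2*x)
        * G (j+1) - G j) :
    G (2*m) = ((Chebyshev.U ℂ (m:ℤ)).eval x)^2 := by
  set u : ℤ → ℂ := fun k => (Chebyshev.U ℂ k).eval x with hu_def
  have hu : ∀ k : ℤ, u k = 2*x*u (k-1) - u (k-2) := by
    intro k
    simp only [hu_def]
    rw [Chebyshev.U_eq ℂ k]
    simp
  have hu0 : u 0 = 1 := by simp [hu_def]
  have hu1 : u 1 = 2*x := by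
    simp only [hu_def, Chebyshev.U_one]; simp
  have hum1 : u (-1) = 0 := by simp [hu_def, Chebyshev.U_neg_one]
  have step1 : ∀ k, k < m → G k = u (k:ℤ) := by
    intro k
    induction k using Nat.strong_induction_on with
    | _ k ih =>
      intro hk
      match k, hk with
      | 0, hk => rw [h0]; exact hu0.symm
      | 1, hk =>
        rw [h1, if_neg (by omega)]
        exact hu1.symm
      | (k+2), hk =>
        rw [hrec k (by omega), if_neg (by omega), if_neg (by omega),
          ih (k+1) (by omega) (by omega), ih k (by omega) (by omega)]
        rw [show ((k+2:ℕ):ℤ) = (k:ℤ)+2 by push_cast; ring, hu ((k:ℤ)+2),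
          show (k:ℤ)+2-1 = (k:ℤ)+1 by ring, show (k:ℤ)+2-2 = (k:ℤ) by ring,
          show ((k+1:ℕ):ℤ) = (k:ℤ)+1 by push_cast; ring]
  have step2 : G m = Complex.I * u ((m:ℤ)-1) + u (m:ℤ) := by
    rcases eq_or_lt_of_le hm with h | h
    · subst h
      rw [h1, if_pos rfl, show ((1:ℕ):ℤ) = 1 by norm_num, show (1:ℤ)-1 = 0 by norm_num,
        hu0, hu1]
      ring
    · obtain ⟨k, rfl⟩ : ∃ k, m = k+2 := ⟨m-2, by omega⟩
      rw [hrec k (by omega), if_pos rfl,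
        step1 (k+1) (by omega), step1 k (by omega)]
      have e2 : ((k+2:ℕ):ℤ) = (k:ℤ)+2 := by push_cast; ring
      have e1 : ((k+1:ℕ):ℤ) = (k:ℤ)+1 := by push_cast; ring
      rw [e2, e1, show (k:ℤ)+2-1 = (k:ℤ)+1 by ring]
      have h2 := hu ((k:ℤ)+2)
      rw [show (k:ℤ)+2-1 = (k:ℤ)+1 by ring, show (k:ℤ)+2-2 = (k:ℤ) by ring] at h2
      linear_combination -h2
  have step3 : G (m+1) = (2*x - Complex.I) * G m - u ((m:ℤ)-1) := by
    obtain ⟨k, rfl⟩ : ∃ k, m = k+1 := ⟨m-1, by omega⟩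
    rw [show k+1+1 = k+2 from rfl, hrec k (by omega), if_neg (by omega), if_pos rfl,
      step1 k (by omega)]
    have e1 : ((k+1:ℕ):ℤ)-1 = (k:ℤ) := by push_cast; ring
    rw [e1]
  have step4 : ∀ j, j ≤ m - 1 →
      G (m+1+j) = u (j:ℤ) * G (m+1) - u ((j:ℤ)-1) * G m := by
    intro j
    induction j using Nat.strong_induction_on with
    | _ j ih =>
      intro hj
      match j, hj with
      | 0, hj => norm_num [hu0, hum1]
      | 1, hj =>
        rw [show m+1+1 = m+2 from rfl, hrec m (by omega), if_neg (by omega), if_neg (by omega),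
          show ((1:ℕ):ℤ) = 1 by norm_num, show (1:ℤ)-1 = 0 by norm_num, hu0, hu1]
        ring
      | (j+2), hj =>
        rw [show m+1+(j+2) = (m+j+1)+2 by ring, hrec (m+j+1) (by omega),
          if_neg (by omega), if_neg (by omega),
          show (m+j+1)+1 = m+1+(j+1) by ring, show m+j+1 = m+1+j by ring,
          ih (j+1) (by omega) (by omega), ih j (by omega) (by omega)]
        have e2 : ((j+2:ℕ):ℤ) = (j:ℤ)+2 := by push_cast; ring
        have e1 : ((j+1:ℕ):ℤ) = (j:ℤ)+1 := by push_cast; ring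
        rw [e2, e1, show (j:ℤ)+2-1 = (j:ℤ)+1 by ring, show (j:ℤ)+1-1 = (j:ℤ) by ring,
          hu ((j:ℤ)+2), show (j:ℤ)+2-1 = (j:ℤ)+1 by ring, show (j:ℤ)+2-2 = (j:ℤ) by ring,
          hu ((j:ℤ)+1), show (j:ℤ)+1-1 = (j:ℤ) by ring, show (j:ℤ)+1-2 = (j:ℤ)-1 by ring]
        ring
  have final := step4 (m-1) le_rfl
  rw [show m+1+(m-1) = 2*m by omega] at final
  rw [final, show ((m-1:ℕ):ℤ) = (m:ℤ)-1 by omega, step3, step2]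
  have hA : u ((m:ℤ)-2) = 2*x*u ((m:ℤ)-1) - u (m:ℤ) := by linear_combination hu (m:ℤ)
  rw [show (m:ℤ)-1-1 = (m:ℤ)-2 by ring, hA]
  linear_combination (-(u ((m:ℤ)-1)^2)) * Complex.I_sq


lemma natDegree_U (k : ℕ) : (Chebyshev.U ℂ (k:ℤ)).natDegree = k := by
  induction k using Nat.strong_induction_on with
  | _ k ih =>
    match k with
    | 0 => simp [Chebyshev.U_zero]
    | 1 =>
      rw [show ((1:ℕ):ℤ) = 1 by norm_num, Chebyshev.U_one,
        show (2*X : ℂ[X]) = C 2 * X from rfl]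
      exact natDegree_C_mul_X 2 two_ne_zero
    | (k+2) =>
      have h1 : (Chebyshev.U ℂ ((k+1:ℕ):ℤ)).natDegree = k+1 := ih (k+1) (by omega)
      have h0 : (Chebyshev.U ℂ ((k:ℕ):ℤ)).natDegree = k := ih k (by omega)
      rw [show ((k+1:ℕ):ℤ) = (k:ℤ)+1 by push_cast; ring] at h1
      rw [show ((k+2:ℕ):ℤ) = (k:ℤ)+2 by push_cast; ring, Chebyshev.U_add_two]
      have hne : Chebyshev.U ℂ ((k:ℤ)+1) ≠ 0 := by
        intro h; rw [h] at h1; simp at h1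
      have hmul : (2*X*Chebyshev.U ℂ ((k:ℤ)+1)).natDegree = k+2 := by
        rw [mul_assoc, show (2*(X*Chebyshev.U ℂ ((k:ℤ)+1))) = C 2 * (X*Chebyshev.U ℂ ((k:ℤ)+1)) from rfl,
          natDegree_C_mul (two_ne_zero), natDegree_mul X_ne_zero hne, natDegree_X, h1]
        ring
      rw [natDegree_sub_eq_left_of_natDegree_lt (by rw [hmul, h0]; omega), hmul]

lemma U_ne_zero {m : ℕ} (hm : 1 ≤ m) : Chebyshev.U ℂ (m:ℤ) ≠ 0 := by
  intro h
  have := natDegree_U m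
  rw [h] at this
  simp at this
  omega

lemma roots_eq_of (p : Polynomial ℂ) (S : Finset ℂ) (hp : p ≠ 0) (hcard : p.natDegree ≤ S.card)
    (hr : ∀ s ∈ S, p.IsRoot s) : p.roots = S.val := by
  have hle : S.val ≤ p.roots := by
    rw [Multiset.le_iff_count]
    intro a
    by_cases ha : a ∈ S
    · have h1 : S.val.count a = 1 := Multiset.count_eq_one_of_mem S.nodup ha
      have h2 : 0 < p.roots.count a := by
        rw [Polynomial.count_roots]
        exact (rootMultiplicity_pos hp).mpr (hr a ha)
      omega
    · rw [Multiset.count_eq_zero_of_notMem (by simpa using ha)]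
      omega
  refine (Multiset.eq_of_le_of_card_le hle ?_).symm
  calc Multiset.card p.roots ≤ p.natDegree := card_roots' p
    _ ≤ S.card := hcard

lemma evalchar {k : ℕ} (M : Matrix (Fin k) (Fin k) ℂ) (μ : ℂ) :
    M.charpoly.eval μ = (μ • (1 : Matrix (Fin k) (Fin k) ℂ) - M).det := by
  rw [Matrix.charpoly, ← Polynomial.coe_evalRingHom, RingHom.map_det]
  congr 1
  ext i j
  by_cases h : i = j
  · subst h
    simp [Matrix.charmatrix_apply, Matrix.one_apply]
  · simp [Matrix.charmatrix_apply, Matrix.one_apply, h, Matrix.diagonal_apply_ne _ h]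



noncomputable def dd (x : ℂ) (m : ℕ) : ℕ → ℂ :=
  fun i => if i+1 = m then 2*x - Complex.I else if i+1 = m+1 then 2*x + Complex.I else 2*x



lemma det_tri (x : ℂ) (m : ℕ) (hm : 1 ≤ m) :
    (triM (dd x m) (2*m)).det = ((Chebyshev.U ℂ (m:ℤ)).eval x)^2 := by
  have h := key x m hm (fun j => (triM (fun i => dd x m (2*m - j + i)) j).det) ?_ ?_ ?_
  · rw [← h]
    show _ = (triM (fun i => dd x m (2*m - 2*m + i)) (2*m)).det
    congr 1
    ext i j
    simp only [triM, Matrix.of_apply]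
    congr 2 <;> omega
  · simp [Matrix.det_fin_zero]
  · show (triM (fun i => dd x m (2*m - 1 + i)) 1).det = _
    rw [Matrix.det_fin_one]
    have : triM (fun i => dd x m (2*m - 1 + i)) 1 0 0 = dd x m (2*m - 1 + 0) := by
      simp [triM]
    rw [this]
    simp only [dd]
    by_cases h1 : m = 1
    · subst h1; norm_num
    · rw [if_neg (by omega), if_neg (by omega), if_neg (by omega)]
  · intro j hj
    have hr := triM_rec (fun i => dd x m (2*m-(j+2)+i)) j
    have e1 : (fun i => dd x m (2*m-(j+2)+(i+1))) = (fun i => dd x m (2*m-(j+1)+i)) :=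
      funext fun i => by congr 1; omega
    have e2 : (fun i => dd x m (2*m-(j+2)+(i+2))) = (fun i => dd x m (2*m-j+i)) :=
      funext fun i => by congr 1; omega
    have e3 : (2*m-(j+2)) = (2*m - (j+2) + 0) := by omega
    rw [e1, e2] at hr
    rw [hr]
    congr 1
    congr 1
    show dd x m (2*m-(j+2)+0) = _
    simp only [dd]
    by_cases hA : j+2 = m
    · rw [if_neg (by omega), if_pos (by omega), if_pos hA]
    · by_cases hB : j+2 = m+1
      · rw [if_pos (by omega), if_neg hA, if_pos hB]
      · rw [if_neg (by omega), if_neg (by omega), if_neg hA, if_neg hB]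


lemma matId (n m : ℕ) (t : ℝ) (ht : 0 < t) (x : ℂ) (hm : 1 ≤ m) (hnm : n = 2*m) :
    (2*x) • (1 : Matrix (Fin n) (Fin n) ℂ)
        - (t:ℂ)⁻¹ • Hu n m t (Complex.I*(t:ℂ)) (-(Complex.I*(t:ℂ)))
      = triM (dd x m) n := by
  have htne : (t:ℂ) ≠ 0 := Complex.ofReal_ne_zero.mpr (ne_of_gt ht)
  ext i j
  simp only [Hu, triM, dd, Matrix.sub_apply, Matrix.smul_apply, Matrix.one_apply,
    Matrix.of_apply, smul_eq_mul]
  have hn1 : n+1-m = m+1 := by omega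
  rw [hn1]
  by_cases hij : (i:ℕ) = (j:ℕ)
  · have hd : i = j := Fin.ext hij
    subst hd
    rw [if_pos rfl, if_pos rfl, if_pos rfl]
    split_ifs <;> field_simp <;> ring
  · have hd : i ≠ j := fun h => hij (by rw [h])
    rw [if_neg hd, if_neg hij, if_neg hij]
    split_ifs <;> field_simp <;> ring

theorem stmt12 (n m : ℕ) (hn : 2 ≤ n) (hm : 1 ≤ m) (hmn : 2*m ≤ n)
    (t : ℝ) (ht : 0 < t) (zm zmb : ℂ)
    (hnm : n = 2*m)
    (hzm : zm = Complex.I * (t : ℂ)) (hzmb : zmb = -(Complex.I * (t : ℂ))) :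
    (∀ x : ℂ,
      Matrix.det ((2*x) • (1 : Matrix (Fin n) (Fin n) ℂ) - (t : ℂ)⁻¹ • Hu n m t zm zmb) =
        ((Chebyshev.U ℂ (m : ℤ)).eval x)^2) ∧
    spectrum ℂ (Hu n m t zm zmb) =
      (fun j : ℕ => ((2 * t * Real.cos (j * Real.pi / (m + 1)) : ℝ) : ℂ)) '' (Set.Icc 1 m) ∧
    (∀ μ ∈ spectrum ℂ (Hu n m t zm zmb),
      (Hu n m t zm zmb).charpoly.rootMultiplicity μ = 2) := by
  subst hzm hzmb
  have htne : (t:ℂ) ≠ 0 := Complex.ofReal_ne_zero.mpr (ne_of_gt ht)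
  have h2tne : (2*(t:ℂ)) ≠ 0 := by simp [htne]
  -- Part 1
  have P1 : ∀ x : ℂ,
      Matrix.det ((2*x) • (1 : Matrix (Fin n) (Fin n) ℂ)
        - (t : ℂ)⁻¹ • Hu n m t (Complex.I*(t:ℂ)) (-(Complex.I*(t:ℂ))))
        = ((Chebyshev.U ℂ (m : ℤ)).eval x)^2 := by
    intro x
    rw [matId n m t ht x hm hnm, hnm, det_tri x m hm]
  set H := Hu n m t (Complex.I*(t:ℂ)) (-(Complex.I*(t:ℂ))) with hH
  have hchar : ∀ μ : ℂ, H.charpoly.eval μ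
      = (t:ℂ)^n * ((Chebyshev.U ℂ (m:ℤ)).eval ((2*(t:ℂ))⁻¹ * μ))^2 := by
    intro μ
    rw [evalchar]
    have hmat : μ • (1 : Matrix (Fin n) (Fin n) ℂ) - H
        = (t:ℂ) • ((2*((2*(t:ℂ))⁻¹*μ)) • (1 : Matrix (Fin n) (Fin n) ℂ) - (t:ℂ)⁻¹ • H) := by
      rw [smul_sub, smul_smul, smul_smul]
      congr 2
      · field_simp
      · rw [mul_inv_cancel₀ htne, one_smul]
    rw [hmat, Matrix.det_smul, P1 ((2*(t:ℂ))⁻¹*μ)]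
    simp
  have hpi := Real.pi_pos
  set r : ℕ → ℝ := fun j => Real.cos (j * Real.pi / (m + 1)) with hr_def
  have hmem : ∀ j : ℕ, j ∈ Finset.Icc 1 m →
      (j:ℝ) * Real.pi / (m+1) ∈ Set.Icc 0 Real.pi := by
    intro j hj
    obtain ⟨hj1, hj2⟩ := Finset.mem_Icc.mp hj
    constructor
    · positivity
    · rw [div_le_iff₀ (by positivity)]
      have : (j:ℝ) ≤ (m:ℝ) := by exact_mod_cast hj2
      nlinarith
  have hinjR : Set.InjOn (fun j : ℕ => r j) ↑(Finset.Icc 1 m) := by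
    intro a ha b hb hab
    simp only [hr_def] at hab
    have h1 := Real.injOn_cos (hmem a ha) (hmem b hb) hab
    rw [div_left_inj' (by positivity), mul_left_inj' (ne_of_gt hpi)] at h1
    exact_mod_cast h1
  have hUroot : ∀ j : ℕ, j ∈ Finset.Icc 1 m →
      (Chebyshev.U ℂ (m:ℤ)).eval ((r j : ℝ) : ℂ) = 0 := by
    intro j hj
    obtain ⟨hj1, hj2⟩ := Finset.mem_Icc.mp hj
    have hsin : Real.sin ((j:ℝ) * Real.pi / (m+1)) ≠ 0 := by
      refine ne_of_gt (Real.sin_pos_of_pos_of_lt_pi ?_ ?_)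
      · have : (1:ℝ) ≤ (j:ℝ) := by exact_mod_cast hj1
        positivity
      · rw [div_lt_iff₀ (by positivity)]
        have : (j:ℝ) ≤ (m:ℝ) := by exact_mod_cast hj2
        nlinarith
    have hUreal : (Chebyshev.U ℝ (m:ℤ)).eval (r j) = 0 := by
      have h := Chebyshev.U_real_cos ((j:ℝ) * Real.pi / (m+1)) (m:ℤ)
      have harg : (((m:ℤ):ℝ)+1) * ((j:ℝ) * Real.pi / (m+1)) = (j:ℝ) * Real.pi := by
        push_cast
        field_simp
      rw [harg, Real.sin_nat_mul_pi] at h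
      rw [hr_def]
      exact (mul_eq_zero.mp h).resolve_right hsin
    have hmap : Chebyshev.U ℂ (m:ℤ) = (Chebyshev.U ℝ (m:ℤ)).map Complex.ofRealHom :=
      (Chebyshev.map_U Complex.ofRealHom (m:ℤ)).symm
    rw [hmap, show ((r j : ℝ) : ℂ) = Complex.ofRealHom (r j) from rfl,
      Polynomial.eval_map, Polynomial.eval₂_at_apply, hUreal]
    simp
  have hinjC : Set.InjOn (fun j : ℕ => ((r j : ℝ) : ℂ)) ↑(Finset.Icc 1 m) := by
    intro a ha b hb hab
    have h1 : ((r a : ℝ) : ℂ) = ((r b : ℝ) : ℂ) := hab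
    exact hinjR ha hb (show r a = r b by exact_mod_cast h1)
  set S1 : Finset ℂ := (Finset.Icc 1 m).image (fun j : ℕ => ((r j : ℝ) : ℂ)) with hS1
  have hS1card : S1.card = m := by
    rw [hS1, Finset.card_image_of_injOn hinjC, Nat.card_Icc]
    omega
  have hUne : Chebyshev.U ℂ (m:ℤ) ≠ 0 := U_ne_zero hm
  have hrootsU : (Chebyshev.U ℂ (m:ℤ)).roots = S1.val := by
    refine roots_eq_of _ S1 hUne (by rw [natDegree_U, hS1card]) ?_
    intro s hs
    obtain ⟨j, hj, rfl⟩ := Finset.mem_image.mp hs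
    exact hUroot j hj
  have hUzero : ∀ z : ℂ, ((Chebyshev.U ℂ (m:ℤ)).eval z = 0 ↔ z ∈ S1) := by
    intro z
    constructor
    · intro hz
      have hz2 : z ∈ (Chebyshev.U ℂ (m:ℤ)).roots := by
        rw [Polynomial.mem_roots hUne]
        exact hz
      rw [hrootsU] at hz2
      exact hz2
    · intro hz
      obtain ⟨j, hj, rfl⟩ := Finset.mem_image.mp hz
      exact hUroot j hj
  have hspec : ∀ μ : ℂ, μ ∈ spectrum ℂ H ↔
      (Chebyshev.U ℂ (m:ℤ)).eval ((2*(t:ℂ))⁻¹ * μ) = 0 := by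
    intro μ
    rw [spectrum.mem_iff, Algebra.algebraMap_eq_smul_one, Matrix.isUnit_iff_isUnit_det,
      isUnit_iff_ne_zero, not_ne_iff, ← evalchar, hchar μ]
    constructor
    · intro h
      rcases mul_eq_zero.mp h with h | h
      · exact absurd h (pow_ne_zero n htne)
      · exact pow_eq_zero_iff (by norm_num) |>.mp h
    · intro h
      rw [h]
      ring
  refine ⟨P1, ?_, ?_⟩
  · -- spectrum equality
    ext μ
    rw [Set.mem_image, hspec μ, hUzero]
    simp only [hS1, Finset.mem_image, Finset.mem_Icc]
    constructor
    · rintro ⟨j, hj, hjeq⟩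
      refine ⟨j, Set.mem_Icc.mpr hj, ?_⟩
      show ((2 * t * r j : ℝ) : ℂ) = μ
      have h3 : ((2 * t * r j : ℝ) : ℂ) = 2*(t:ℂ)*((r j : ℝ):ℂ) := by push_cast; ring
      rw [h3, hjeq]
      field_simp
    · rintro ⟨j, hj, hjeq⟩
      refine ⟨j, Set.mem_Icc.mp hj, ?_⟩
      have h4 : ((2 * t * r j : ℝ) : ℂ) = μ := hjeq
      rw [← h4]
      have h3 : ((2 * t * r j : ℝ) : ℂ) = 2*(t:ℂ)*((r j : ℝ):ℂ) := by push_cast; ring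
      rw [h3]
      field_simp
  · -- multiplicities
    intro μ hμ
    set p : Polynomial ℂ := (Chebyshev.U ℂ (m:ℤ)).comp (C ((2*(t:ℂ))⁻¹) * X) with hp_def
    have hpev : ∀ z : ℂ, p.eval z = (Chebyshev.U ℂ (m:ℤ)).eval ((2*(t:ℂ))⁻¹ * z) := by
      intro z
      rw [hp_def, Polynomial.eval_comp]
      simp
    have hcp : H.charpoly = C ((t:ℂ)^n) * p^2 := by
      apply Polynomial.funext
      intro z
      rw [hchar z]
      simp [hpev z]
    have hpdeg : p.natDegree = m := by
      rw [hp_def, Polynomial.natDegree_comp, natDegree_U,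
        natDegree_C_mul_X _ (inv_ne_zero h2tne)]
      ring
    have hpne : p ≠ 0 := by
      intro h
      rw [h] at hpdeg
      simp at hpdeg
      omega
    set S2 : Finset ℂ := (Finset.Icc 1 m).image (fun j : ℕ => ((2 * t * r j : ℝ) : ℂ)) with hS2
    have hinjC2 : Set.InjOn (fun j : ℕ => ((2 * t * r j : ℝ) : ℂ)) ↑(Finset.Icc 1 m) := by
      intro a ha b hb hab
      have h1 : ((2 * t * r a : ℝ) : ℂ) = ((2 * t * r b : ℝ) : ℂ) := hab
      have hab2 : 2 * t * r a = 2 * t * r b := by exact_mod_cast h1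
      have h2t : (2 * t : ℝ) ≠ 0 := by positivity
      exact hinjR ha hb (mul_left_cancel₀ h2t hab2)
    have hS2card : S2.card = m := by
      rw [hS2, Finset.card_image_of_injOn hinjC2, Nat.card_Icc]
      omega
    have hrootsP : p.roots = S2.val := by
      refine roots_eq_of _ S2 hpne (by rw [hpdeg, hS2card]) ?_
      intro s hs
      obtain ⟨j, hj, rfl⟩ := Finset.mem_image.mp hs
      show p.eval _ = 0
      rw [hpev]
      have : (2*(t:ℂ))⁻¹ * ((2 * t * r j : ℝ) : ℂ) = ((r j : ℝ) : ℂ) := by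
        push_cast
        field_simp
      rw [this]
      exact hUroot j hj
    have hμS2 : μ ∈ S2 := by
      have h1 := (hspec μ).mp hμ
      rw [hUzero] at h1
      obtain ⟨j, hj, hjeq⟩ := Finset.mem_image.mp h1
      rw [hS2]
      refine Finset.mem_image.mpr ⟨j, hj, ?_⟩
      have : ((2 * t * r j : ℝ) : ℂ) = 2*(t:ℂ)*((r j : ℝ):ℂ) := by push_cast; ring
      rw [this, hjeq]
      field_simp
    have hCne : (C ((t:ℂ)^n) : Polynomial ℂ) ≠ 0 :=
      Polynomial.C_ne_zero.mpr (pow_ne_zero n htne)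
    have hrm1 : Polynomial.rootMultiplicity μ p = 1 := by
      rw [← Polynomial.count_roots, hrootsP]
      exact Multiset.count_eq_one_of_mem S2.nodup (Finset.mem_val.mpr hμS2)
    show Polynomial.rootMultiplicity μ H.charpoly = 2
    rw [hcp, Polynomial.rootMultiplicity_mul
        (mul_ne_zero hCne (pow_ne_zero 2 hpne)),
      Polynomial.rootMultiplicity_C, sq,
      Polynomial.rootMultiplicity_mul (mul_ne_zero hpne hpne), hrm1]
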